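/- Assume 0 < λ < 1 and γ > 3. Let P₆ := (V₆, C₆) with V₆ := 2/(γ−3) and C₆ := (γ−1)/(3−γ) (so C₆ < 0), and let F_V, F_C, G_V, G_C denote the first-order partial derivatives of F and G evaluated at P₆. Then F_C > 0, F_V > 0, G_C < 0, and the following chain of inequalities holds: −ℓ^{−1} < −F_V/F_C < −1 < −G_V/G_C. -/

import Mathlib

noncomputable def ell (γ : ℝ) : ℝ := 2 / (γ - 1)
noncomputable def Vstar (γ lam : ℝ) : ℝ := ell γ * (1 - lam)
noncomputable def k1 (γ lam : ℝ) : ℝ := (1 / ell γ - 1) * (lam - 1)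
noncomputable def k0 (γ lam : ℝ) : ℝ := (lam - 1) / ell γ
noncomputable def Dfun (V C : ℝ) : ℝ := (1 + V) ^ 2 - C ^ 2
noncomputable def Gfun (γ lam V C : ℝ) : ℝ :=
  C ^ 2 * (V - Vstar γ lam) - V * (1 + V) * (lam + V)
noncomputable def Ffun (γ lam V C : ℝ) : ℝ :=
  C * (C ^ 2 - (1 + V) ^ 2 + k1 γ lam * (1 + V) - k0 γ lam)

lemma hasDerivAt_cubic (a b c d x : ℝ) :
    HasDerivAt (fun t : ℝ => a*t^3 + b*t^2 + c*t + d) (3*a*x^2 + 2*b*x + c) x := by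
  have heq : (fun t : ℝ => a*t^3 + b*t^2 + c*t + d)
      = (fun t : ℝ => a*t^3 + (b*t^2 + c*t) + d) := by funext t; ring
  rw [heq]
  have h := (((hasDerivAt_pow 3 x).const_mul a).add
    (((hasDerivAt_pow 2 x).const_mul b).add ((hasDerivAt_id' x).const_mul c))).add_const d
  refine HasDerivAt.congr_deriv h ?_
  push_cast
  ring

set_option maxHeartbeats 2000000 in
theorem stmt_11 (γ lam : ℝ) (hγ : 3 < γ) (hlam0 : 0 < lam) (hlam1 : lam < 1) :
    let V6 : ℝ := 2 / (γ - 3)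
    let C6 : ℝ := (γ - 1) / (3 - γ)
    let FV : ℝ := deriv (fun V => Ffun γ lam V C6) V6
    let FC : ℝ := deriv (fun C => Ffun γ lam V6 C) C6
    let GV : ℝ := deriv (fun V => Gfun γ lam V C6) V6
    let GC : ℝ := deriv (fun C => Gfun γ lam V6 C) C6
    C6 < 0 ∧ 0 < FC ∧ 0 < FV ∧ GC < 0 ∧
    -(ell γ)⁻¹ < -FV / FC ∧ -FV / FC < -1 ∧ -1 < -GV / GC := by
  intro V6 C6 FV FC GV GC
  have hs : (0:ℝ) < γ - 3 := by linarith
  have hg : (0:ℝ) < γ - 1 := by linarith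
  have h3 : (3:ℝ) - γ < 0 := by linarith
  have hm : (0:ℝ) < 1 - lam := by linarith
  have hV6 : V6 = 2 / (γ - 3) := rfl
  have hC6 : C6 = (γ - 1) / (3 - γ) := rfl
  have hk1 : k1 γ lam = (γ-3)*(lam-1)/2 := by
    unfold k1 ell; rw [one_div, inv_div]; ring
  have hk0 : k0 γ lam = (lam-1)*(γ-1)/2 := by
    unfold k0 ell; rw [div_div_eq_mul_div]
  have hVs : Vstar γ lam = 2*(1-lam)/(γ-1) := by
    unfold Vstar ell; ring
  -- derivative computations
  have hFV : FV = 2*(-C6)*V6 + C6*(k1 γ lam - 2) := by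
    have heq : (fun V => Ffun γ lam V C6)
        = (fun V : ℝ => 0*V^3 + (-C6)*V^2 + (C6*(k1 γ lam - 2))*V
            + (C6^3 - C6 + C6*k1 γ lam - C6*k0 γ lam)) := by
      funext V; simp only [Ffun]; ring
    show deriv (fun V => Ffun γ lam V C6) V6 = _
    rw [heq, (hasDerivAt_cubic _ _ _ _ _).deriv]; ring
  have hFC : FC = 3*C6^2 + (-(1+V6)^2 + k1 γ lam*(1+V6) - k0 γ lam) := by
    have heq : (fun C => Ffun γ lam V6 C)
        = (fun C : ℝ => 1*C^3 + 0*C^2 + (-(1+V6)^2 + k1 γ lam*(1+V6) - k0 γ lam)*C + 0) := by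
      funext C; simp only [Ffun]; ring
    show deriv (fun C => Ffun γ lam V6 C) C6 = _
    rw [heq, (hasDerivAt_cubic _ _ _ _ _).deriv]; ring
  have hGV : GV = -3*V6^2 - 2*(1+lam)*V6 + (C6^2 - lam) := by
    have heq : (fun V => Gfun γ lam V C6)
        = (fun V : ℝ => (-1)*V^3 + (-(1+lam))*V^2 + (C6^2 - lam)*V
            + (-(C6^2*Vstar γ lam))) := by
      funext V; simp only [Gfun]; ring
    show deriv (fun V => Gfun γ lam V C6) V6 = _
    rw [heq, (hasDerivAt_cubic _ _ _ _ _).deriv]; ring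
  have hGC : GC = 2*(V6 - Vstar γ lam)*C6 := by
    have heq : (fun C => Gfun γ lam V6 C)
        = (fun C : ℝ => 0*C^3 + (V6 - Vstar γ lam)*C^2 + 0*C
            + (-(V6*(1+V6)*(lam+V6)))) := by
      funext C; simp only [Gfun]; ring
    show deriv (fun C => Gfun γ lam V6 C) C6 = _
    rw [heq, (hasDerivAt_cubic _ _ _ _ _).deriv]; ring
  clear_value V6 C6 FV FC GV GC
  -- closed forms
  obtain ⟨u, hu_def⟩ : ∃ u : ℝ, u = ((γ-1)/(γ-3))^2 := ⟨_, rfl⟩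
  have hu : u*(γ-3)^2 = (γ-1)^2 := by
    rw [hu_def]; field_simp
  have hu0 : 0 < u := by
    rw [hu_def]; positivity
  have hFCv : FC = 2*u := by
    rw [hFC, hC6, hV6, hk1, hk0, hu_def]; field_simp [hs.ne', h3.ne]; ring
  have hFVv : FV = 2*u + (γ-1)*(1-lam)/2 := by
    rw [hFV, hC6, hV6, hk1, hu_def]; field_simp [hs.ne', h3.ne]; ring
  have hGCv : GC = (4*(1-lam)*(γ-3) - 4*(γ-1))/(γ-3)^2 := by
    rw [hGC, hC6, hV6, hVs]; field_simp [hs.ne', hg.ne', h3.ne]; ring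
  have hGVGC : GV - GC = 1 - lam := by
    rw [hGV, hGCv, hC6, hV6]; field_simp [hs.ne', h3.ne]; ring
  -- basic signs
  have haux : 0 < (γ-1)*(1-lam)/2 := by positivity
  have hFCpos : 0 < FC := by rw [hFCv]; positivity
  have hFVpos : 0 < FV := by rw [hFVv]; positivity
  have hGCneg : GC < 0 := by
    rw [hGCv]
    apply div_neg_of_neg_of_pos _ (by positivity)
    nlinarith [mul_lt_mul_of_pos_right (show 1-lam < 1 by linarith) hs]
  have hC6neg : C6 < 0 := by rw [hC6]; exact div_neg_of_pos_of_neg hg h3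
  have hinv : (ell γ)⁻¹ = (γ-1)/2 := by unfold ell; rw [inv_div]
  have key2 : FV < (γ-1)/2 * FC := by
    have e : (γ-1)/2 * FC - FV = (γ-3)*u - (γ-1)*(1-lam)/2 := by
      rw [hFVv, hFCv]; ring
    have h7 : (γ-3)*((γ-3)*((γ-3)*u - (γ-1)*(1-lam)/2))
        = (γ-3)*(γ-1)^2 - (γ-1)*(1-lam)*(γ-3)^2/2 := by
      linear_combination (γ-3)*hu
    have hR : 0 < (γ-3)*(γ-1)^2 - (γ-1)*(1-lam)*(γ-3)^2/2 := by
      nlinarith [mul_pos hg hs, mul_pos (mul_pos hg hm) hs, mul_pos (mul_pos hg hs) hs]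
    have h6 : 0 < (γ-3)*u - (γ-1)*(1-lam)/2 := by
      nlinarith [h7, hR, mul_pos hs hs]
    linarith [e, h6]
  refine ⟨hC6neg, hFCpos, hFVpos, hGCneg, ?_, ?_, ?_⟩
  · rw [neg_div]
    refine neg_lt_neg ?_
    rw [← hinv] at key2
    exact (div_lt_iff₀ hFCpos).2 (by linarith [key2])
  · rw [neg_div]
    exact neg_lt_neg ((one_lt_div hFCpos).2 (by rw [hFVv, hFCv]; linarith))
  · rw [show -GV/GC = GV/(-GC) by rw [neg_div, div_neg]]
    rw [lt_div_iff₀ (by linarith : (0:ℝ) < -GC)]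
    linarith
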